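/- The coefficients C_l = Σ_{k≥l} Σ_{m=0}^{l} binom(k-1,l)·binom(l,m)·(-1)^{l+m}·(k/z)·p_k·θ(m/k - T) are the coefficients of the power series expansion of g(φ) = Σ_k (k/z)p_k Σ_{m≥kT} B_{k-1,m}[φ] around φ = 0; that is, for each fixed finite-support degree distribution p_k, Σ_{l≥0} C_l φ^l = g(φ) for all φ ∈ [0,1]. -/

import Mathlib

/-- Heaviside step function: θ(y) = 1 if y ≥ 0, else 0. -/
noncomputable def heaviside (y : ℝ) : ℝ := if 0 ≤ y then 1 else 0

lemma core (n N m : ℕ) (hn : n < N) (φ : ℝ) :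
    ∑ l ∈ Finset.range N, (n.choose l : ℝ) * (l.choose m : ℝ) * (-1 : ℝ) ^ (l + m) * φ ^ l
      = (n.choose m : ℝ) * φ ^ m * (1 - φ) ^ (n - m) := by
  by_cases hm : m ≤ n
  · have hsub : Finset.Ico m (n + 1) ⊆ Finset.range N := by
      intro x hx
      simp only [Finset.mem_Ico] at hx
      exact Finset.mem_range.mpr (lt_of_lt_of_le hx.2 hn)
    rw [← Finset.sum_subset hsub (by
      intro l _ hl
      simp only [Finset.mem_Ico, not_and_or, not_le, not_lt] at hl
      rcases hl with h | h
      · rw [Nat.choose_eq_zero_of_lt h]; push_cast; ring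
      · rw [Nat.choose_eq_zero_of_lt h]; push_cast; ring)]
    rw [Finset.sum_Ico_eq_sum_range]
    have hd : n + 1 - m = n - m + 1 := by omega
    rw [hd]
    have key : ∀ j ∈ Finset.range (n - m + 1),
        ((n.choose (m + j) : ℝ) * ((m + j).choose m : ℝ) * (-1 : ℝ) ^ (m + j + m) * φ ^ (m + j))
          = (n.choose m : ℝ) * φ ^ m * ((-φ) ^ j * 1 ^ (n - m - j) * ((n - m).choose j : ℝ)) := by
      intro j hj
      have hj' : j ≤ n - m := by simpa using Nat.lt_succ_iff.mp (Finset.mem_range.mp hj)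
      have h1 : n.choose (m + j) * (m + j).choose m = n.choose m * (n - m).choose j := by
        have := Nat.choose_mul (n := n) (k := m + j) (s := m) (by omega)
        simpa using this
      have h1' : (n.choose (m + j) : ℝ) * ((m + j).choose m : ℝ)
          = (n.choose m : ℝ) * ((n - m).choose j : ℝ) := by exact_mod_cast congrArg (Nat.cast (R := ℝ)) h1
      have hsign : (-1 : ℝ) ^ (m + j + m) = (-1 : ℝ) ^ j := by
        rw [show m + j + m = 2 * m + j by ring, pow_add, pow_mul]
        simp
      rw [hsign, h1', neg_pow]
      ring
    rw [Finset.sum_congr rfl key, ← Finset.mul_sum, ← add_pow (-φ) 1 (n - m),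
      show (-φ + 1 : ℝ) = 1 - φ by ring]
  · push_neg at hm
    rw [Nat.choose_eq_zero_of_lt hm]
    rw [Finset.sum_eq_zero]
    · simp
    intro l _
    by_cases hl : l < m
    · rw [Nat.choose_eq_zero_of_lt hl]; push_cast; ring
    · rw [Nat.choose_eq_zero_of_lt (n := n) (by omega)]; push_cast; ring

/-- The coefficients
C_l = Σ_{k≥l} Σ_{m=0}^{l} C(k-1,l)·C(l,m)·(-1)^{l+m}·(k/z)·p_k·θ(m/k - T)
are the power-series coefficients of
g(φ) = Σ_k (k/z)·p_k·Σ_{m ≥ kT} B_{k-1,m}[φ] around φ = 0: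
for every finitely supported degree distribution, Σ_l C_l φ^l = g(φ) on [0,1]. -/
theorem stmt7 (K : ℕ) (p : ℕ → ℝ) (T : ℝ) (hT0 : 0 < T) (hT1 : T < 1)
    (hp0 : ∀ k, 0 ≤ p k) (hsupp : ∀ k, K ≤ k → p k = 0)
    (hp1 : ∑ k ∈ Finset.range K, p k = 1)
    (z : ℝ) (hzdef : z = ∑ k ∈ Finset.range K, (k : ℝ) * p k) (hz : 0 < z) :
    ∀ φ ∈ Set.Icc (0 : ℝ) 1,
      ∑ l ∈ Finset.range K,
          (∑ k ∈ Finset.range K, ∑ m ∈ Finset.range (l + 1),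
              ((k - 1).choose l : ℝ) * (l.choose m : ℝ) * (-1 : ℝ) ^ (l + m) *
                ((k : ℝ) / z) * p k * heaviside ((m : ℝ) / (k : ℝ) - T)) * φ ^ l
        = ∑ k ∈ Finset.range K, ((k : ℝ) / z) * p k *
            ∑ m ∈ Finset.range k,
              heaviside ((m : ℝ) / (k : ℝ) - T) *
                (((k - 1).choose m : ℝ) * φ ^ m * (1 - φ) ^ (k - 1 - m)) := by
  intro φ _
  -- Extend the inner m-sums to range K on both sides, swap sums, apply `core`.
  have hL : ∀ l ∈ Finset.range K,
      (∑ k ∈ Finset.range K, ∑ m ∈ Finset.range (l + 1),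
          ((k - 1).choose l : ℝ) * (l.choose m : ℝ) * (-1 : ℝ) ^ (l + m) *
            ((k : ℝ) / z) * p k * heaviside ((m : ℝ) / (k : ℝ) - T)) * φ ^ l
      = ∑ k ∈ Finset.range K, ∑ m ∈ Finset.range K,
          ((k - 1).choose l : ℝ) * (l.choose m : ℝ) * (-1 : ℝ) ^ (l + m) *
            ((k : ℝ) / z) * p k * heaviside ((m : ℝ) / (k : ℝ) - T) * φ ^ l := by
    intro l hl
    rw [Finset.sum_mul]
    refine Finset.sum_congr rfl fun k _ => ?_
    rw [Finset.sum_mul]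
    refine Finset.sum_subset (Finset.range_subset_range.mpr (Finset.mem_range.mp hl)) ?_
    intro m _ hm
    rw [Nat.choose_eq_zero_of_lt (n := l) (by simp at hm; omega)]
    push_cast; ring
  rw [Finset.sum_congr rfl hL]
  rw [Finset.sum_comm]
  have hR : ∀ k ∈ Finset.range K,
      ((k : ℝ) / z) * p k *
        ∑ m ∈ Finset.range k,
          heaviside ((m : ℝ) / (k : ℝ) - T) *
            (((k - 1).choose m : ℝ) * φ ^ m * (1 - φ) ^ (k - 1 - m))
      = ∑ m ∈ Finset.range K,
          ((k : ℝ) / z) * p k * heaviside ((m : ℝ) / (k : ℝ) - T) *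
            (((k - 1).choose m : ℝ) * φ ^ m * (1 - φ) ^ (k - 1 - m)) := by
    intro k hk
    rw [Finset.mul_sum]
    by_cases hk0 : k = 0
    · subst hk0
      simp
    rw [Finset.sum_subset (Finset.range_subset_range.mpr (le_of_lt (Finset.mem_range.mp hk)))
      (fun m _ hm => by
        rw [Nat.choose_eq_zero_of_lt (n := k - 1) (by simp at hm; omega)]
        push_cast; ring)]
    exact Finset.sum_congr rfl fun m _ => by ring
  rw [Finset.sum_congr rfl hR]
  refine Finset.sum_congr rfl fun k hk => ?_
  rw [Finset.sum_comm]
  refine Finset.sum_congr rfl fun m _ => ?_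
  have hkn : k - 1 < K := by have := Finset.mem_range.mp hk; omega
  have := core (k - 1) K m hkn φ
  calc ∑ l ∈ Finset.range K,
        ((k - 1).choose l : ℝ) * (l.choose m : ℝ) * (-1 : ℝ) ^ (l + m) *
          ((k : ℝ) / z) * p k * heaviside ((m : ℝ) / (k : ℝ) - T) * φ ^ l
      = (((k : ℝ) / z) * p k * heaviside ((m : ℝ) / (k : ℝ) - T)) *
        ∑ l ∈ Finset.range K,
          ((k - 1).choose l : ℝ) * (l.choose m : ℝ) * (-1 : ℝ) ^ (l + m) * φ ^ l := by
        rw [Finset.mul_sum]; exact Finset.sum_congr rfl fun l _ => by ring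
    _ = _ := by rw [this]
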